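/- Every absolute norm on ℝ² (i.e. a norm φ with φ(x₁,x₂) depending only on |x₁| and |x₂|) is submodular on the positive cone: for all x, y in ℝ²₊, φ(x ∨ y) + φ(x ∧ y) ≤ φ(x) + φ(y), where ∨ and ∧ denote componentwise max and min. -/

import Mathlib

def IsNorm2 (φ : ℝ × ℝ → ℝ) : Prop :=
  (∀ x y : ℝ × ℝ, φ (x + y) ≤ φ x + φ y) ∧
  (∀ (c : ℝ) (x : ℝ × ℝ), φ (c • x) = |c| * φ x) ∧
  (∀ x : ℝ × ℝ, φ x = 0 ↔ x = 0)

def IsAbsolute (φ : ℝ × ℝ → ℝ) : Prop :=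
  ∀ x : ℝ × ℝ, φ x = φ (|x.1|, |x.2|)

lemma norm2_convexF (φ : ℝ × ℝ → ℝ) (hn : IsNorm2 φ) (t : ℝ) :
    ConvexOn ℝ Set.univ (fun r : ℝ => φ (r, t)) := by
  obtain ⟨hsub, hhom, -⟩ := hn
  refine ⟨convex_univ, ?_⟩
  intro a _ b _ α β hα hβ hαβ
  have h1 : (α • a + β • b, t) = α • ((a : ℝ), t) + β • ((b : ℝ), t) := by
    simp only [Prod.ext_iff, Prod.smul_mk, Prod.mk_add_mk, smul_eq_mul]
    constructor
    · trivial
    · rw [← add_mul, hαβ, one_mul]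
  calc φ (α • a + β • b, t) = φ (α • ((a : ℝ), t) + β • ((b : ℝ), t)) := by rw [h1]
    _ ≤ φ (α • ((a : ℝ), t)) + φ (β • ((b : ℝ), t)) := hsub _ _
    _ = α * φ (a, t) + β * φ (b, t) := by
        rw [hhom, hhom, abs_of_nonneg hα, abs_of_nonneg hβ]

lemma key_rect (φ : ℝ × ℝ → ℝ) (hn : IsNorm2 φ) {p q s t : ℝ}
    (hp : 0 ≤ p) (hpq : p ≤ q) (hs : 0 ≤ s) (hst : s ≤ t) :
    φ (q, t) + φ (p, s) ≤ φ (q, s) + φ (p, t) := by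
  obtain ⟨hsub, hhom, hzero⟩ := hn
  rcases eq_or_lt_of_le hpq with rfl | hpq
  · linarith
  rcases eq_or_lt_of_le hst with rfl | hst
  · linarith
  rcases eq_or_lt_of_le hs with hs0 | hs0
  · -- s = 0 : triangle inequality
    subst hs0
    have h1 : ((q : ℝ), t) = (p, t) + (q - p, 0) := by simp [Prod.ext_iff]
    have h2 : φ (q, t) ≤ φ (p, t) + φ (q - p, 0) := by rw [h1]; exact hsub _ _
    have e1 : ∀ c : ℝ, 0 ≤ c → φ (c, 0) = c * φ (1, 0) := by
      intro c hc
      have : ((c : ℝ), 0) = c • ((1 : ℝ), (0 : ℝ)) := by simp [Prod.ext_iff]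
      rw [this, hhom, abs_of_nonneg hc]
    have e2 := e1 (q - p) (by linarith)
    have e3 := e1 p hp
    have e4 := e1 q (by linarith)
    nlinarith
  · -- 0 < s < t : slope argument
    have ht : 0 < t := lt_trans hs0 hst
    set lam : ℝ := s / t with hlam
    have hlam0 : 0 < lam := div_pos hs0 ht
    have hlam1 : lam < 1 := (div_lt_one ht).2 hst
    have hscale : ∀ r : ℝ, φ (r, s) = lam * φ (r / lam, t) := by
      intro r
      have : ((r : ℝ), s) = lam • ((r / lam : ℝ), t) := by
        simp [Prod.ext_iff, smul_eq_mul]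
        constructor <;> field_simp [hlam] <;> rw [hlam, div_mul_cancel₀ s ht.ne']
      rw [this, hhom, abs_of_nonneg hlam0.le]
    have hcv := norm2_convexF φ ⟨hsub, hhom, hzero⟩ t
    set F : ℝ → ℝ := fun r => φ (r, t) with hF
    have hq0 : 0 < q := lt_of_le_of_lt hp hpq
    have hple : p ≤ p / lam := by
      rw [le_div_iff₀ hlam0]; nlinarith
    have hqle : q ≤ q / lam := by
      rw [le_div_iff₀ hlam0]; nlinarith
    have hplt : p / lam < q / lam := by
      rw [div_lt_div_iff₀ hlam0 hlam0]; nlinarith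
    -- slope over [p,q] ≤ slope over [p, q/lam]
    have s1 : (F q - F p) / (q - p) ≤ (F (q / lam) - F p) / (q / lam - p) :=
      hcv.secant_mono trivial trivial trivial (by linarith) (by linarith [lt_of_lt_of_le hpq hqle]) hqle
    -- slope over [p, q/lam] ≤ slope over [p/lam, q/lam]
    have s2 : (F p - F (q / lam)) / (p - q / lam) ≤ (F (p / lam) - F (q / lam)) / (p / lam - q / lam) :=
      hcv.secant_mono trivial trivial trivial
        (by intro h; rw [h] at hpq; linarith [hqle]) (by linarith) hple
    have hpq' : p < q / lam := lt_of_lt_of_le hpq hqle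
    have s2' : (F (q / lam) - F p) / (q / lam - p) ≤ (F (q / lam) - F (p / lam)) / (q / lam - p / lam) := by
      have e1 : (F p - F (q / lam)) / (p - q / lam) = (F (q / lam) - F p) / (q / lam - p) := by
        rw [← neg_div_neg_eq]; ring_nf
      have e2 : (F (p / lam) - F (q / lam)) / (p / lam - q / lam)
          = (F (q / lam) - F (p / lam)) / (q / lam - p / lam) := by
        rw [← neg_div_neg_eq]; ring_nf
      rw [← e1, ← e2]; exact s2
    have s3 : (F q - F p) / (q - p) ≤ (F (q / lam) - F (p / lam)) / (q / lam - p / lam) :=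
      le_trans s1 s2'
    have hden : q / lam - p / lam = (q - p) / lam := by ring
    have hqp : 0 < q - p := by linarith
    have key : F q - F p ≤ lam * (F (q / lam) - F (p / lam)) := by
      rw [hden] at s3
      have hd : 0 < (q - p) / lam := div_pos hqp hlam0
      rw [div_le_div_iff₀ hqp hd] at s3
      have h2 := mul_le_mul_of_nonneg_right s3 hlam0.le
      have h3 : (F q - F p) * ((q - p) / lam) * lam = (F q - F p) * (q - p) := by
        field_simp
      nlinarith [h2, h3, hqp]
    have e1 := hscale p
    have e2 := hscale q
    simp only [hF] at key
    linarith [key, e1, e2]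

theorem absolute_norm_submodular (φ : ℝ × ℝ → ℝ)
    (hn : IsNorm2 φ) (ha : IsAbsolute φ) :
    ∀ x y : ℝ × ℝ, 0 ≤ x.1 → 0 ≤ x.2 → 0 ≤ y.1 → 0 ≤ y.2 →
      φ (max x.1 y.1, max x.2 y.2) + φ (min x.1 y.1, min x.2 y.2) ≤ φ x + φ y := by
  intro x y hx1 hx2 hy1 hy2
  rcases le_total x.1 y.1 with h1 | h1 <;> rcases le_total x.2 y.2 with h2 | h2
  · rw [max_eq_right h1, max_eq_right h2, min_eq_left h1, min_eq_left h2]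
    simp [add_comm]
  · rw [max_eq_right h1, max_eq_left h2, min_eq_left h1, min_eq_right h2]
    have := key_rect φ hn hx1 h1 hy2 h2
    linarith
  · rw [max_eq_left h1, max_eq_right h2, min_eq_right h1, min_eq_left h2]
    have := key_rect φ hn hy1 h1 hx2 h2
    linarith
  · rw [max_eq_left h1, max_eq_left h2, min_eq_right h1, min_eq_right h2]
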